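/- For $\alpha > 0$ and integers $R \ge 1$, $M \ge 2$, the cumulative weights $\W_j = \sum_{i=j}^R \w_i(R,M)$ satisfy $\W_1 = 1$ and $\max_{1 \le j \le R}|\W_j| \le \W_\alpha(M) := \frac{M^{-\alpha}}{\pi_{\alpha,M}^2}\sum_{k\ge 0} M^{-\alpha\frac{k(k+3)}{2}} + \frac{1}{\pi_{\alpha,M}}$, a bound independent of $R$. -/

import Mathlib

open Finset

namespace RRAux

noncomputable def Pq (q : ℝ) (n : ℕ) : ℝ := ∏ j ∈ range n, (1 - q ^ (j + 1))

variable {q : ℝ}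

lemma one_sub_pow_pos (hq0 : 0 ≤ q) (hq1 : q < 1) (n : ℕ) :
    0 < 1 - q ^ (n + 1) := by
  have : q ^ (n + 1) < 1 := pow_lt_one₀ hq0 hq1 (Nat.succ_ne_zero n)
  linarith

lemma Pq_pos (hq0 : 0 ≤ q) (hq1 : q < 1) (n : ℕ) : 0 < Pq q n :=
  prod_pos fun j _ => one_sub_pow_pos hq0 hq1 j

lemma Pq_succ (q : ℝ) (n : ℕ) : Pq q (n + 1) = Pq q n * (1 - q ^ (n + 1)) :=
  prod_range_succ _ _

lemma key (hq0 : 0 ≤ q) (hq1 : q < 1) (n : ℕ) :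
    ∑ k ∈ range (n + 1),
      (-1 : ℝ) ^ k * q ^ (k * (k + 1) / 2) / (Pq q k * Pq q (n - k)) = 1 := by
  induction n with
  | zero => simp [Pq]
  | succ n ih =>
    have hPne : ∀ m, Pq q m ≠ 0 := fun m => (Pq_pos hq0 hq1 m).ne'
    have hone : ∀ m : ℕ, (1 : ℝ) - q ^ (m + 1) ≠ 0 := fun m =>
      (one_sub_pow_pos hq0 hq1 m).ne'
    set f : ℕ → ℕ → ℝ := fun m k =>
      (-1 : ℝ) ^ k * q ^ (k * (k + 1) / 2) / (Pq q k * Pq q (m - k)) with hf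
    have hcancel : (1 - q ^ (n + 1)) *
        (∑ k ∈ range (n + 2), f (n + 1) k) = (1 - q ^ (n + 1)) * 1 := by
      rw [mul_sum]
      set A : ℕ → ℝ := fun k =>
        (-1 : ℝ) ^ k * q ^ (k * (k + 1) / 2) * (1 - q ^ (n + 1 - k)) /
          (Pq q k * Pq q (n + 1 - k)) with hA
      set B : ℕ → ℝ := fun k =>
        (-1 : ℝ) ^ k * q ^ (k * (k + 1) / 2) * q ^ (n + 1 - k) * (1 - q ^ k) /
          (Pq q k * Pq q (n + 1 - k)) with hB
      have hsplit : ∀ k ∈ range (n + 2),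
          (1 - q ^ (n + 1)) * f (n + 1) k = A k + B k := by
        intro k hk
        have hk' : k ≤ n + 1 := by simpa [Nat.lt_succ_iff] using mem_range.mp hk
        have hqq : q ^ (n + 1 - k) * q ^ k = q ^ (n + 1) := by
          rw [← pow_add]; congr 1; omega
        have hid : (1 : ℝ) - q ^ (n + 1) =
            (1 - q ^ (n + 1 - k)) + q ^ (n + 1 - k) * (1 - q ^ k) := by
          rw [mul_sub, hqq]; ring
        simp only [hf, hA, hB]
        rw [hid]; ring
      rw [sum_congr rfl hsplit, sum_add_distrib]
      have hAsum : ∑ k ∈ range (n + 2), A k = 1 := by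
        rw [sum_range_succ]
        have hA0 : A (n + 1) = 0 := by
          simp only [hA, Nat.sub_self, pow_zero, sub_self, mul_zero, zero_div]
        rw [hA0, add_zero, ← ih]
        refine sum_congr rfl fun k hk => ?_
        have hk' : k ≤ n := by simpa [Nat.lt_succ_iff] using mem_range.mp hk
        have e1 : n + 1 - k = (n - k) + 1 := by omega
        simp only [hA, hf, e1, Pq_succ]
        rw [show Pq q k * (Pq q (n - k) * (1 - q ^ (n - k + 1))) =
            Pq q k * Pq q (n - k) * (1 - q ^ (n - k + 1)) by ring]
        rw [mul_div_mul_right _ _ (hone (n - k))]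
      have hBsum : ∑ k ∈ range (n + 2), B k = -(q ^ (n + 1)) := by
        rw [sum_range_succ']
        have hB0 : B 0 = 0 := by simp [hB]
        rw [hB0, add_zero]
        have hstep : ∀ k ∈ range (n + 1), B (k + 1) = -(q ^ (n + 1)) * f n k := by
          intro k hk
          have hk' : k ≤ n := by simpa [Nat.lt_succ_iff] using mem_range.mp hk
          have e1 : n + 1 - (k + 1) = n - k := by omega
          have e2 : (k + 1) * (k + 1 + 1) / 2 = k * (k + 1) / 2 + (k + 1) := by
            have : (k + 1) * (k + 1 + 1) = k * (k + 1) + (k + 1) * 2 := by ring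
            rw [this, Nat.add_mul_div_right _ _ (by norm_num : (0:ℕ) < 2)]
          have e3 : q ^ ((k + 1) * (k + 1 + 1) / 2) * q ^ (n - k) =
              q ^ (n + 1) * q ^ (k * (k + 1) / 2) := by
            rw [← pow_add, ← pow_add, e2]
            congr 1
            generalize k * (k + 1) / 2 = t
            omega
          have hnum : (-1:ℝ) ^ k * -1 * q ^ ((k + 1) * (k + 1 + 1) / 2) * q ^ (n - k) =
              -(q ^ (n + 1)) * ((-1:ℝ) ^ k * q ^ (k * (k + 1) / 2)) := by
            linear_combination ((-1:ℝ) ^ k * -1) * e3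
          simp only [hB, hf, e1, Pq_succ]
          rw [show Pq q k * (1 - q ^ (k + 1)) * Pq q (n - k) =
              Pq q k * Pq q (n - k) * (1 - q ^ (k + 1)) by ring]
          rw [show (-1:ℝ) ^ (k + 1) * q ^ ((k + 1) * (k + 1 + 1) / 2) * q ^ (n - k) *
                (1 - q ^ (k + 1)) =
              (-1:ℝ) ^ k * -1 * q ^ ((k + 1) * (k + 1 + 1) / 2) * q ^ (n - k) *
                (1 - q ^ (k + 1)) by rw [pow_succ]]
          rw [mul_div_mul_right _ _ (hone k), ← mul_div_assoc, ← hnum]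
        rw [sum_congr rfl hstep, ← mul_sum, ih, mul_one]
      rw [hAsum, hBsum]; ring
    have hne : (1 : ℝ) - q ^ (n + 1) ≠ 0 := (one_sub_pow_pos hq0 hq1 n).ne'
    have := mul_left_cancel₀ hne hcancel
    simpa [hf] using this

lemma summable_log (hq0 : 0 < q) (hq1 : q < 1) :
    Summable fun n : ℕ => Real.log (1 - q ^ (n + 1)) := by
  have hpos : ∀ n : ℕ, 0 < 1 - q ^ (n + 1) := one_sub_pow_pos hq0.le hq1
  have hbound : ∀ n : ℕ, -Real.log (1 - q ^ (n + 1)) ≤ q ^ (n + 1) * (1 / (1 - q)) := by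
    intro n
    have h1 : 0 < 1 - q := by linarith
    have h3 : -Real.log (1 - q ^ (n + 1)) = Real.log (1 - q ^ (n + 1))⁻¹ := by
      rw [Real.log_inv]
    rw [h3]
    have h4 : Real.log (1 - q ^ (n + 1))⁻¹ ≤ (1 - q ^ (n + 1))⁻¹ - 1 :=
      Real.log_le_sub_one_of_pos (inv_pos.mpr (hpos n))
    have h5 : (1 - q ^ (n + 1))⁻¹ - 1 = q ^ (n + 1) / (1 - q ^ (n + 1)) := by
      field_simp [(hpos n).ne']
      ring
    have h6 : q ^ (n + 1) / (1 - q ^ (n + 1)) ≤ q ^ (n + 1) / (1 - q) := by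
      have h2 : q ^ (n + 1) ≤ q := by
        calc q ^ (n + 1) ≤ q ^ 1 := pow_le_pow_of_le_one hq0.le hq1.le (by omega)
          _ = q := pow_one q
      apply div_le_div_of_nonneg_left (by positivity) h1
      linarith
    calc Real.log (1 - q ^ (n + 1))⁻¹ ≤ (1 - q ^ (n + 1))⁻¹ - 1 := h4
      _ = q ^ (n + 1) / (1 - q ^ (n + 1)) := h5
      _ ≤ q ^ (n + 1) / (1 - q) := h6
      _ = q ^ (n + 1) * (1 / (1 - q)) := by ring
  have hgeo : Summable fun n : ℕ => q ^ (n + 1) * (1 / (1 - q)) := by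
    apply Summable.mul_right
    exact (summable_geometric_of_lt_one hq0.le hq1).comp_injective (add_left_injective 1)
  have hneg : Summable fun n : ℕ => -Real.log (1 - q ^ (n + 1)) := by
    apply Summable.of_nonneg_of_le (fun n => ?_) hbound hgeo
    have hp := hpos n
    have : Real.log (1 - q ^ (n + 1)) ≤ 0 :=
      Real.log_nonpos hp.le (by nlinarith [pow_pos hq0 (n + 1)])
    linarith
  simpa using hneg.neg

lemma summable_log_shift (hq0 : 0 < q) (hq1 : q < 1) (m : ℕ) :
    Summable fun n : ℕ => Real.log (1 - q ^ (n + m + 1)) :=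
  (summable_log hq0 hq1).comp_injective (add_left_injective m)

lemma exp_form (hq0 : 0 < q) (hq1 : q < 1) (m : ℕ) :
    (∏' i : ℕ, (1 - q ^ (i + m + 1))) =
      Real.exp (∑' i : ℕ, Real.log (1 - q ^ (i + m + 1))) := by
  have h := Real.rexp_tsum_eq_tprod (f := fun i => 1 - q ^ (i + m + 1))
    (fun i => one_sub_pow_pos hq0.le hq1 (i + m))
    (summable_log_shift hq0 hq1 m)
  exact h.symm

lemma multipliable_shift (hq0 : 0 < q) (hq1 : q < 1) (m : ℕ) :
    Multipliable fun n : ℕ => 1 - q ^ (n + m + 1) := by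
  refine Real.multipliable_of_summable_log (f := fun i => 1 - q ^ (i + m + 1))
    (fun i => ?_) (summable_log_shift hq0 hq1 m)
  exact one_sub_pow_pos hq0.le hq1 (i + m)

lemma tail_pos (hq0 : 0 < q) (hq1 : q < 1) (m : ℕ) :
    0 < ∏' i : ℕ, (1 - q ^ (i + m + 1)) := by
  rw [exp_form hq0 hq1 m]; exact Real.exp_pos _

lemma tail_le_one (hq0 : 0 < q) (hq1 : q < 1) (m : ℕ) :
    (∏' i : ℕ, (1 - q ^ (i + m + 1))) ≤ 1 := by
  rw [exp_form hq0 hq1 m]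
  rw [Real.exp_le_one_iff]
  apply tsum_nonpos
  intro i
  apply Real.log_nonpos (one_sub_pow_pos hq0.le hq1 (i + m)).le
  linarith [pow_nonneg hq0.le (i + m + 1)]

lemma tprod_pos (hq0 : 0 < q) (hq1 : q < 1) :
    0 < ∏' n : ℕ, (1 - q ^ (n + 1)) := by
  have := tail_pos hq0 hq1 0
  simpa using this

lemma tprod_le_Pq (hq0 : 0 < q) (hq1 : q < 1) (m : ℕ) :
    (∏' n : ℕ, (1 - q ^ (n + 1))) ≤ Pq q m := by
  have h := Multipliable.prod_mul_tprod_nat_mul' (f := fun n : ℕ => 1 - q ^ (n + 1)) (k := m)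
    (multipliable_shift hq0 hq1 m)
  have h' : (∏' n : ℕ, (1 - q ^ (n + 1))) =
      Pq q m * ∏' i : ℕ, (1 - q ^ (i + m + 1)) := by
    rw [← h, Pq]
  rw [h']
  exact mul_le_of_le_one_right (Pq_pos hq0.le hq1 m).le (tail_le_one hq0 hq1 m)

end RRAux

/-- Richardson–Romberg weight `w_{i+1}(R,M)` for geometric refiners `n_i = M^{i-1}`
(Lean index `i` corresponds to paper index `i+1`). -/
noncomputable def rrWeight (α : ℝ) (M R i : ℕ) : ℝ :=
  (-1 : ℝ) ^ (R - 1 - i) *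
      (M : ℝ) ^ (-(α / 2) * (((R - 1 - i) * (R - i) : ℕ) : ℝ)) /
    ((∏ j ∈ range i, (1 - (M : ℝ) ^ (-((j + 1 : ℕ) : ℝ) * α))) *
      ∏ j ∈ range (R - 1 - i), (1 - (M : ℝ) ^ (-((j + 1 : ℕ) : ℝ) * α)))

/-- The infinite product `π_{α,M} = ∏_{k ≥ 1} (1 - M^{-αk})`. -/
noncomputable def piAlphaM (α : ℝ) (M : ℕ) : ℝ :=
  ∏' k : ℕ, (1 - (M : ℝ) ^ (-(α * ((k + 1 : ℕ) : ℝ))))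

/-- Cumulative weight `W_{j+1} = ∑_{i = j+1}^{R} w_i(R,M)` (Lean index `j`
corresponds to paper index `j+1`). -/
noncomputable def rrCumWeight (α : ℝ) (M R j : ℕ) : ℝ :=
  ∑ i ∈ Ico j R, rrWeight α M R i

theorem rrCumWeight_bounds (α : ℝ) (hα : 0 < α) (M R : ℕ) (hM : 2 ≤ M)
    (hR : 1 ≤ R) :
    rrCumWeight α M R 0 = 1 ∧
      ∀ j < R, |rrCumWeight α M R j| ≤
        (M : ℝ) ^ (-α) / (piAlphaM α M) ^ 2 *
            (∑' k : ℕ, (M : ℝ) ^ (-(α * ((k * (k + 3) : ℕ) : ℝ) / 2))) +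
          1 / piAlphaM α M := by
  obtain ⟨n, rfl⟩ : ∃ n, R = n + 1 := ⟨R - 1, by omega⟩
  have hM0 : (0:ℝ) ≤ (M:ℝ) := by positivity
  have hM1 : (1:ℝ) < (M:ℝ) := by exact_mod_cast (by omega : 1 < M)
  set q : ℝ := (M:ℝ) ^ (-α) with hqdef
  have hq0 : 0 < q := Real.rpow_pos_of_pos (by linarith) _
  have hq1 : q < 1 := Real.rpow_lt_one_of_one_lt_of_neg hM1 (by linarith)
  have base : ∀ h : ℕ, (M:ℝ) ^ ((-α) * (h:ℝ)) = q ^ h := by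
    intro h
    rw [Real.rpow_mul hM0, Real.rpow_natCast]
  have conv1 : ∀ j : ℕ, (M:ℝ) ^ (-((j + 1 : ℕ) : ℝ) * α) = q ^ (j + 1) := by
    intro j
    rw [show -((j + 1 : ℕ) : ℝ) * α = (-α) * ((j + 1 : ℕ) : ℝ) by ring]
    exact base (j + 1)
  have convPi : ∀ k : ℕ, (M:ℝ) ^ (-(α * ((k + 1 : ℕ) : ℝ))) = q ^ (k + 1) := by
    intro k
    rw [show -(α * ((k + 1 : ℕ) : ℝ)) = (-α) * ((k + 1 : ℕ) : ℝ) by ring]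
    exact base (k + 1)
  have prodEq : ∀ i : ℕ,
      (∏ j ∈ range i, (1 - (M:ℝ) ^ (-((j + 1 : ℕ) : ℝ) * α))) = RRAux.Pq q i :=
    fun i => prod_congr rfl fun j _ => by rw [conv1 j]
  set R := n + 1 with hRdef
  have hevens : ∀ i : ℕ, ∃ h : ℕ, (R - 1 - i) * (R - i) = 2 * h := by
    intro i
    rcases Nat.lt_or_ge i R with hi | hi
    · have hri : R - i = (R - 1 - i) + 1 := by omega
      rw [hri]
      rcases Nat.even_mul_succ_self (R - 1 - i) with ⟨h, hh⟩
      exact ⟨h, by rw [hh]; ring⟩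
    · exact ⟨0, by rw [show R - 1 - i = 0 by omega]; ring⟩
  have weightEq : ∀ i : ℕ, rrWeight α M R i =
      (-1:ℝ) ^ (R - 1 - i) * q ^ ((R - 1 - i) * (R - i) / 2) /
        (RRAux.Pq q i * RRAux.Pq q (R - 1 - i)) := by
    intro i
    obtain ⟨h, hh⟩ := hevens i
    have hpow : (M:ℝ) ^ (-(α / 2) * ((((R - 1 - i) * (R - i) : ℕ)) : ℝ)) =
        q ^ ((R - 1 - i) * (R - i) / 2) := by
      rw [show (-(α / 2) * ((((R - 1 - i) * (R - i) : ℕ)) : ℝ)) = (-α) * (h : ℝ) by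
        rw [hh]; push_cast; ring]
      rw [base h, hh]
      congr 1
      omega
    rw [rrWeight, prodEq, prodEq, hpow]
  have πpos : 0 < piAlphaM α M := by
    have piEq : piAlphaM α M = ∏' k : ℕ, (1 - q ^ (k + 1)) :=
      tprod_congr fun k => by rw [convPi k]
    rw [piEq]; exact RRAux.tprod_pos hq0 hq1
  have πle : ∀ m : ℕ, piAlphaM α M ≤ RRAux.Pq q m := by
    intro m
    have piEq : piAlphaM α M = ∏' k : ℕ, (1 - q ^ (k + 1)) :=
      tprod_congr fun k => by rw [convPi k]
    rw [piEq]; exact RRAux.tprod_le_Pq hq0 hq1 m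
  have hPpos : ∀ m : ℕ, 0 < RRAux.Pq q m := RRAux.Pq_pos hq0.le hq1
  constructor
  · -- W₁ = 1
    rw [rrCumWeight, ← range_eq_Ico]
    have hg : ∀ i ∈ range R, rrWeight α M R i =
        (fun k => (-1:ℝ) ^ k * q ^ (k * (k + 1) / 2) /
          (RRAux.Pq q (R - 1 - k) * RRAux.Pq q k)) (R - 1 - i) := by
      intro i hi
      have hi' : i < R := mem_range.mp hi
      rw [weightEq i]
      have e1 : R - 1 - (R - 1 - i) = i := by omega
      have e2 : (R - 1 - i) * (R - i) = (R - 1 - i) * ((R - 1 - i) + 1) := by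
        congr 1; omega
      beta_reduce
      rw [e1, e2]
    rw [sum_congr rfl hg,
      sum_range_reflect (fun k => (-1:ℝ) ^ k * q ^ (k * (k + 1) / 2) /
        (RRAux.Pq q (R - 1 - k) * RRAux.Pq q k)) R]
    have hrw : (∑ k ∈ range R, (fun k => (-1:ℝ) ^ k * q ^ (k * (k + 1) / 2) /
        (RRAux.Pq q (R - 1 - k) * RRAux.Pq q k)) k) =
        ∑ k ∈ range (n + 1), (-1:ℝ) ^ k * q ^ (k * (k + 1) / 2) /
          (RRAux.Pq q k * RRAux.Pq q (n - k)) := by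
      refine sum_congr rfl fun k _ => ?_
      beta_reduce
      rw [show R - 1 - k = n - k by omega,
        mul_comm (RRAux.Pq q (n - k)) (RRAux.Pq q k)]
    rw [hrw]
    exact RRAux.key hq0.le hq1 n
  · -- the bound
    intro j hj
    have habs : ∀ i : ℕ, |rrWeight α M R i| =
        q ^ ((R - 1 - i) * (R - i) / 2) / (RRAux.Pq q i * RRAux.Pq q (R - 1 - i)) := by
      intro i
      rw [weightEq i, abs_div, abs_mul, abs_pow, abs_neg, abs_one, one_pow, one_mul,
        abs_of_pos (pow_pos hq0 _), abs_of_pos (mul_pos (hPpos i) (hPpos (R - 1 - i)))]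
    have hsum : Summable (fun k : ℕ => q ^ (k * (k + 3) / 2)) := by
      apply Summable.of_nonneg_of_le (fun k => by positivity) (fun k => ?_)
        (summable_geometric_of_lt_one hq0.le hq1)
      apply pow_le_pow_of_le_one hq0.le hq1.le
      exact (Nat.le_div_iff_mul_le (by norm_num)).mpr (Nat.mul_le_mul_left k (by omega))
    have tsumEq : (∑' k : ℕ, (M:ℝ) ^ (-(α * ((k * (k + 3) : ℕ) : ℝ) / 2))) =
        ∑' k : ℕ, q ^ (k * (k + 3) / 2) := by
      refine tsum_congr fun k => ?_
      obtain ⟨h, hh⟩ : ∃ h : ℕ, k * (k + 3) = 2 * h := by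
        rcases Nat.even_mul_succ_self k with ⟨h0, hh0⟩
        refine ⟨h0 + k, ?_⟩
        calc k * (k + 3) = k * (k + 1) + 2 * k := by ring
          _ = (h0 + h0) + 2 * k := by rw [hh0]
          _ = 2 * (h0 + k) := by ring
      rw [show -(α * ((k * (k + 3) : ℕ) : ℝ) / 2) = (-α) * (h : ℝ) by
        rw [hh]; push_cast; ring]
      rw [base h, hh]
      congr 1
      omega
    have htsum_nonneg : 0 ≤ ∑' k : ℕ, q ^ (k * (k + 3) / 2) :=
      tsum_nonneg fun k => by positivity
    rw [rrCumWeight, tsumEq]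
    calc |∑ i ∈ Ico j R, rrWeight α M R i|
        ≤ ∑ i ∈ Ico j R, |rrWeight α M R i| := abs_sum_le_sum_abs _ _
      _ ≤ ∑ i ∈ range R, |rrWeight α M R i| := by
          rw [range_eq_Ico]
          exact sum_le_sum_of_subset_of_nonneg
            (Ico_subset_Ico (Nat.zero_le j) le_rfl) (fun i _ _ => abs_nonneg _)
      _ = (∑ i ∈ range n, |rrWeight α M R i|) + |rrWeight α M R n| := sum_range_succ _ n
      _ ≤ q / (piAlphaM α M) ^ 2 * (∑' k : ℕ, q ^ (k * (k + 3) / 2)) +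
          1 / piAlphaM α M := by
          have hlast : |rrWeight α M R n| ≤ 1 / piAlphaM α M := by
            rw [habs n, show R - 1 - n = 0 by omega, show R - n = 1 by omega]
            simp only [Nat.zero_mul, pow_zero, RRAux.Pq]
            rw [prod_range_zero, mul_one]
            rw [show (0 * 1 / 2 : ℕ) = 0 by norm_num] at *
            exact one_div_le_one_div_of_le πpos (πle n)
          have hmain : (∑ i ∈ range n, |rrWeight α M R i|) ≤
              q / (piAlphaM α M) ^ 2 * (∑' k : ℕ, q ^ (k * (k + 3) / 2)) := by
            calc (∑ i ∈ range n, |rrWeight α M R i|)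
                ≤ ∑ i ∈ range n, q ^ ((R - 1 - i) * (R - i) / 2) / (piAlphaM α M) ^ 2 := by
                  refine sum_le_sum fun i _ => ?_
                  rw [habs i]
                  apply div_le_div_of_nonneg_left (by positivity) (by positivity)
                  calc (piAlphaM α M) ^ 2 = piAlphaM α M * piAlphaM α M := sq (piAlphaM α M)
                    _ ≤ RRAux.Pq q i * RRAux.Pq q (R - 1 - i) :=
                        mul_le_mul (πle i) (πle _) πpos.le (hPpos i).le
              _ = (∑ i ∈ range n, q ^ ((R - 1 - i) * (R - i) / 2)) / (piAlphaM α M) ^ 2 := by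
                  rw [sum_div]
              _ ≤ (q * ∑' k : ℕ, q ^ (k * (k + 3) / 2)) / (piAlphaM α M) ^ 2 := by
                  apply div_le_div_of_nonneg_right ?_ (by positivity)
                  · calc (∑ i ∈ range n, q ^ ((R - 1 - i) * (R - i) / 2))
                        = ∑ k ∈ range n, (fun i => q ^ ((R - 1 - i) * (R - i) / 2)) (n - 1 - k) :=
                          (sum_range_reflect _ n).symm
                      _ = ∑ k ∈ range n, q * q ^ (k * (k + 3) / 2) := by
                          refine sum_congr rfl fun k hk => ?_
                          have hk' : k < n := mem_range.mp hk
                          beta_reduce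
                          rw [show (R - 1 - (n - 1 - k)) * (R - (n - 1 - k)) =
                              (k + 1) * (k + 2) by congr 1 <;> omega]
                          rw [show (k + 1) * (k + 2) / 2 = k * (k + 3) / 2 + 1 by
                            rw [show (k + 1) * (k + 2) = k * (k + 3) + 1 * 2 by ring,
                              Nat.add_mul_div_right _ _ (by norm_num : (0:ℕ) < 2)]]
                          rw [pow_succ]
                          ring
                      _ = q * ∑ k ∈ range n, q ^ (k * (k + 3) / 2) := by rw [mul_sum]
                      _ ≤ q * ∑' k : ℕ, q ^ (k * (k + 3) / 2) := by
                          apply mul_le_mul_of_nonneg_left ?_ hq0.le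
                          exact Summable.sum_le_tsum (range n) (fun i _ => by positivity) hsum
              _ = q / (piAlphaM α M) ^ 2 * (∑' k : ℕ, q ^ (k * (k + 3) / 2)) := by
                  ring
          exact add_le_add hmain hlast
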